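/- CVaR policy gradient in RL with the quantile baseline: let f : ℝ → ℝ → ℝ, q : ℝ → ℝ, θ₀ ∈ ℝ, α ∈ ℝ, q₀ = q(θ₀), and let F(x) be the pointwise θ-derivative of f(θ,x) at θ₀. Define G(θ,c) = ∫_{-∞}^{c} f(θ,x) dx and H(θ,c) = ∫_{-∞}^{c} x·f(θ,x) dx. Assume: (i) q has derivative q'(θ₀) at θ₀; (ii) G is Fréchet differentiable at (θ₀,q₀) with ∂_θ G = ∫_{-∞}^{q₀} F(x) dx and ∂_c G = f(θ₀,q₀), with F integrable on (-∞,q₀]; (iii) G(θ, q(θ)) = α for all θ in a neighborhood of θ₀; (iv) H is Fréchet differentiable at (θ₀,q₀) with ∂_θ H = ∫_{-∞}^{q₀} x·F(x) dx and ∂_c H = q₀·f(θ₀,q₀), with x ↦ x·F(x) integrable on (-∞,q₀]. Then the function θ ↦ ∫_{-∞}^{q(θ)} x·f(θ,x) dx has derivative ∫_{-∞}^{q₀} (x − q₀)·F(x) dx at θ₀. -/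

import Mathlib

open MeasureTheory

/-- CVaR policy gradient in RL with the quantile baseline: under the conservation
rule for the moving quantile `q` and differentiability under the integral sign of
both `G (θ, c) = ∫_{-∞}^c f θ x dx` and `H (θ, c) = ∫_{-∞}^c x * f θ x dx`, the
CVaR objective `θ ↦ ∫_{-∞}^{q θ} x * f θ x dx` has derivative
`∫_{-∞}^{q₀} (x - q₀) * F x dx` at `θ₀`. -/
theorem cvar_pg_quantile_baseline (f : ℝ → ℝ → ℝ) (q : ℝ → ℝ) (θ₀ α q' : ℝ) (F : ℝ → ℝ)
    (hq : HasDerivAt q q' θ₀)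
    (hF : ∀ x, HasDerivAt (fun θ => f θ x) (F x) θ₀)
    (hFint : IntegrableOn F (Set.Iic (q θ₀)))
    (hG : HasFDerivAt (fun p : ℝ × ℝ => ∫ x in Set.Iic p.2, f p.1 x)
      ((∫ x in Set.Iic (q θ₀), F x) • ContinuousLinearMap.fst ℝ ℝ ℝ
        + (f θ₀ (q θ₀)) • ContinuousLinearMap.snd ℝ ℝ ℝ) (θ₀, q θ₀))
    (hcons : ∀ᶠ θ in nhds θ₀, (∫ x in Set.Iic (q θ), f θ x) = α)
    (hxFint : IntegrableOn (fun x => x * F x) (Set.Iic (q θ₀)))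
    (hH : HasFDerivAt (fun p : ℝ × ℝ => ∫ x in Set.Iic p.2, x * f p.1 x)
      ((∫ x in Set.Iic (q θ₀), x * F x) • ContinuousLinearMap.fst ℝ ℝ ℝ
        + (q θ₀ * f θ₀ (q θ₀)) • ContinuousLinearMap.snd ℝ ℝ ℝ) (θ₀, q θ₀)) :
    HasDerivAt (fun θ => ∫ x in Set.Iic (q θ), x * f θ x)
      (∫ x in Set.Iic (q θ₀), (x - q θ₀) * F x) θ₀ := by
  have hφ : HasDerivAt (fun θ => ((θ, q θ) : ℝ × ℝ)) (1, q') θ₀ :=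
    (hasDerivAt_id θ₀).prodMk hq
  -- derivative of G ∘ φ
  have hGc := hG.comp_hasDerivAt θ₀ hφ
  have hHc := hH.comp_hasDerivAt θ₀ hφ
  simp only [ContinuousLinearMap.add_apply, ContinuousLinearMap.smul_apply,
    ContinuousLinearMap.coe_fst', ContinuousLinearMap.coe_snd', smul_eq_mul, mul_one] at hGc hHc
  -- G ∘ φ is locally constant α, so its derivative is 0
  have hzero : (∫ x in Set.Iic (q θ₀), F x) + f θ₀ (q θ₀) * q' = 0 := by
    have hconst : HasDerivAt (fun θ => ∫ x in Set.Iic (q θ), f θ x) 0 θ₀ := by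
      have : HasDerivAt (fun _ : ℝ => α) 0 θ₀ := hasDerivAt_const _ _
      exact this.congr_of_eventuallyEq (hcons.mono fun θ hθ => hθ)
    exact hGc.unique hconst
  have h1 : (∫ x in Set.Iic (q θ₀), (x - q θ₀) * F x)
      = (∫ x in Set.Iic (q θ₀), x * F x) - q θ₀ * ∫ x in Set.Iic (q θ₀), F x := by
    rw [← integral_const_mul, ← integral_sub hxFint (hFint.const_mul _)]
    congr 1; ext x; ring
  have h2 : f θ₀ (q θ₀) * q' = -(∫ x in Set.Iic (q θ₀), F x) := by linarith
  have key : (∫ x in Set.Iic (q θ₀), x * F x) + q θ₀ * f θ₀ (q θ₀) * q'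
      = ∫ x in Set.Iic (q θ₀), (x - q θ₀) * F x := by
    rw [h1, mul_assoc, h2]; ring
  rw [← key]
  exact hHc.congr_deriv rfl
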